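/- Let 0 < c₀ < 1/2 and let u₀ solve u' = (u² − u⁴ − c₀²)/(√2√(u⁴+c₀²)) with u₀(0) = √c₀, and set z₀ = u₀'. Then z₀(−x) = c₀·z₀(x)/u₀(x)² for all x ∈ ℝ. -/

import Mathlib

open Set

theorem stmt_19 (c₀ : ℝ) (hc : 0 < c₀) (hc' : c₀ < 1 / 2)
    (u₀ : ℝ → ℝ) (hpos : ∀ x, 0 < u₀ x)
    (hode : ∀ x, HasDerivAt u₀
      (((u₀ x) ^ 2 - (u₀ x) ^ 4 - c₀ ^ 2) /
        (Real.sqrt 2 * Real.sqrt ((u₀ x) ^ 4 + c₀ ^ 2))) x)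
    (h0 : u₀ 0 = Real.sqrt c₀)
    (z₀ : ℝ → ℝ) (hz : z₀ = deriv u₀) :
    ∀ x, z₀ (-x) = c₀ * z₀ x / (u₀ x) ^ 2 := by
  set F : ℝ → ℝ :=
    fun u => (u ^ 2 - u ^ 4 - c₀ ^ 2) / (Real.sqrt 2 * Real.sqrt (u ^ 4 + c₀ ^ 2)) with hF
  have hden : ∀ u : ℝ, (0:ℝ) < u ^ 4 + c₀ ^ 2 := fun u => by positivity
  have hsq : ∀ u : ℝ, Real.sqrt 2 * Real.sqrt (u ^ 4 + c₀ ^ 2) ≠ 0 := fun u => by positivity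
  -- key algebraic identity : F (c₀ / s) = c₀ * F s / s ^ 2 for s > 0
  have key : ∀ s : ℝ, 0 < s → F (c₀ / s) = c₀ * F s / s ^ 2 := by
    intro s hs
    have h1 : (c₀ / s) ^ 4 + c₀ ^ 2 = (c₀ / s ^ 2) ^ 2 * (s ^ 4 + c₀ ^ 2) := by
      field_simp; ring
    have h2 : Real.sqrt ((c₀ / s) ^ 4 + c₀ ^ 2)
        = (c₀ / s ^ 2) * Real.sqrt (s ^ 4 + c₀ ^ 2) := by
      rw [h1, Real.sqrt_mul (by positivity), Real.sqrt_sq (by positivity)]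
    have h3 : Real.sqrt (s ^ 4 + c₀ ^ 2) ≠ 0 := by positivity
    have h4 : Real.sqrt 2 ≠ 0 := by positivity
    simp only [hF, h2]
    field_simp
    ring
  -- F is C¹
  have hFc : ContDiff ℝ 1 F := by
    rw [contDiff_iff_contDiffAt]
    intro u
    apply ContDiffAt.div
    · exact ((contDiffAt_id.pow 2).sub (contDiffAt_id.pow 4)).sub contDiffAt_const
    · exact contDiffAt_const.mul
        ((Real.contDiffAt_sqrt (ne_of_gt (hden u))).comp u
          ((contDiffAt_id.pow 4).add contDiffAt_const))
    · exact hsq u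
  have hu_cont : Continuous u₀ := by
    rw [continuous_iff_continuousAt]; exact fun x => (hode x).continuousAt
  -- the comparison function
  set w : ℝ → ℝ := fun y => c₀ / u₀ (-y) with hw
  have hw_pos : ∀ y, 0 < w y := fun y => div_pos hc (hpos (-y))
  have hw_cont : Continuous w :=
    continuous_const.div (hu_cont.comp continuous_neg) (fun y => ne_of_gt (hpos (-y)))
  have hwode : ∀ x, HasDerivAt w (F (w x)) x := by
    intro x
    have h1 : HasDerivAt (fun y => u₀ (-y)) (F (u₀ (-x)) * (-1)) x := by
      have := (hode (-x)).comp x (hasDerivAt_neg x)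
      exact this
    have h2 : HasDerivAt w
        ((0 * u₀ (-x) - c₀ * (F (u₀ (-x)) * (-1))) / u₀ (-x) ^ 2) x :=
      (hasDerivAt_const x c₀).div h1 (ne_of_gt (hpos (-x)))
    have h3 : F (w x) = (0 * u₀ (-x) - c₀ * (F (u₀ (-x)) * (-1))) / u₀ (-x) ^ 2 := by
      rw [hw]
      simp only []
      rw [key (u₀ (-x)) (hpos (-x))]
      ring
    rw [h3]; exact h2
  have heq0 : u₀ 0 = w 0 := by
    have hs0 : Real.sqrt c₀ ≠ 0 := by positivity
    rw [h0, hw]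
    simp only [neg_zero]
    rw [h0]
    rw [eq_div_iff hs0, Real.mul_self_sqrt hc.le]
  -- uniqueness on compact intervals
  have huv : ∀ x : ℝ, u₀ x = w x := by
    intro x
    set a : ℝ := -(|x| + 1) with ha
    set b : ℝ := |x| + 1 with hb
    have hab : a < b := by
      have : (0:ℝ) < |x| + 1 := by positivity
      simp only [ha, hb]; linarith
    have ht₀ : (0:ℝ) ∈ Ioo a b := by
      constructor <;> simp only [ha, hb] <;> [linarith [abs_nonneg x]; linarith [abs_nonneg x]]
    have hxmem : x ∈ Icc a b := by
      constructor <;> simp only [ha, hb] <;>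
        [linarith [neg_abs_le x]; linarith [le_abs_self x]]
    have hne : (Icc a b).Nonempty := ⟨x, hxmem⟩
    obtain ⟨p₁, hp₁mem, hp₁⟩ := isCompact_Icc.exists_isMinOn hne hu_cont.continuousOn
    obtain ⟨p₂, hp₂mem, hp₂⟩ := isCompact_Icc.exists_isMaxOn hne hu_cont.continuousOn
    obtain ⟨q₁, hq₁mem, hq₁⟩ := isCompact_Icc.exists_isMinOn hne hw_cont.continuousOn
    obtain ⟨q₂, hq₂mem, hq₂⟩ := isCompact_Icc.exists_isMaxOn hne hw_cont.continuousOn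
    set m : ℝ := min (u₀ p₁) (w q₁) with hm
    set M : ℝ := max (u₀ p₂) (w q₂) with hM
    have humem : ∀ t ∈ Icc a b, u₀ t ∈ Icc m M := fun t ht =>
      ⟨le_trans (min_le_left _ _) (hp₁ ht), le_trans (hp₂ ht) (le_max_left _ _)⟩
    have hwmem : ∀ t ∈ Icc a b, w t ∈ Icc m M := fun t ht =>
      ⟨le_trans (min_le_right _ _) (hq₁ ht), le_trans (hq₂ ht) (le_max_right _ _)⟩
    -- Lipschitz bound for F on Icc m M
    have hdcont : Continuous (deriv F) := hFc.continuous_deriv le_rfl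
    obtain ⟨C, hC⟩ := (isCompact_Icc : IsCompact (Icc m M)).exists_bound_of_continuousOn
      hdcont.continuousOn
    have hlip : LipschitzOnWith (Real.toNNReal C) F (Icc m M) := by
      apply Convex.lipschitzOnWith_of_nnnorm_deriv_le
        (fun y _ => (hFc.differentiable one_ne_zero).differentiableAt)
        (fun y hy => ?_) (convex_Icc m M)
      rw [← NNReal.coe_le_coe, coe_nnnorm, Real.coe_toNNReal']
      exact le_trans (hC y hy) (le_max_left C 0)
    have heqon : EqOn u₀ w (Icc a b) :=
      ODE_solution_unique_of_mem_Icc (v := fun _ => F) (s := fun _ => Icc m M)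
        (fun _ _ => hlip) ht₀ hu_cont.continuousOn
        (fun t _ => hode t) (fun t ht => humem t (Ioo_subset_Icc_self ht))
        hw_cont.continuousOn
        (fun t _ => hwode t) (fun t ht => hwmem t (Ioo_subset_Icc_self ht))
        heq0
    exact heqon hxmem
  -- conclude
  intro x
  have hzf : ∀ y, z₀ y = F (u₀ y) := fun y => by rw [hz, (hode y).deriv]
  have h1 : u₀ (-x) = c₀ / u₀ x := by
    have := huv (-x)
    simpa [hw] using this
  rw [hzf (-x), hzf x, h1, key (u₀ x) (hpos x)]
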